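/- Let μ₁, μ₂ > 0, μ = μ₁ + μ₂, a(x) = x(1−x), b(x) = (xμ₁ − (1−x)μ₂)/2, H(x,p) = ½a(x)p² − b(x)p, and S(x) = μ₁log(μ₁/(μ(1−x))) + μ₂log(μ₂/(μx)) for x ∈ (0,1). Then DS(x) = 2b(x)/a(x), and consequently H(x, DS(x)) = 0 and H(x, DS(x) − p) = H(x,p) for all x ∈ (0,1) and p ∈ ℝ (i.e. H is reversible with respect to S). -/

import Mathlib

theorem stmt_17 (μ₁ μ₂ : ℝ) (h₁ : 0 < μ₁) (h₂ : 0 < μ₂) (μ : ℝ) (hμ : μ = μ₁ + μ₂)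
    (a b : ℝ → ℝ) (ha : ∀ x, a x = x * (1 - x))
    (hb : ∀ x, b x = (x * μ₁ - (1 - x) * μ₂) / 2)
    (H : ℝ → ℝ → ℝ) (hH : ∀ x p, H x p = (1 / 2) * a x * p ^ 2 - b x * p)
    (S : ℝ → ℝ)
    (hS : ∀ x ∈ Set.Ioo (0 : ℝ) 1,
      S x = μ₁ * Real.log (μ₁ / (μ * (1 - x))) + μ₂ * Real.log (μ₂ / (μ * x))) :
    ∀ x ∈ Set.Ioo (0 : ℝ) 1,
      deriv S x = 2 * b x / a x ∧
      H x (deriv S x) = 0 ∧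
      ∀ p : ℝ, H x (deriv S x - p) = H x p := by
  intro x hx
  obtain ⟨hx0, hx1⟩ := hx
  have hx1' : (0:ℝ) < 1 - x := by linarith
  have hax : a x ≠ 0 := by rw [ha]; positivity
  have hμ0 : 0 < μ := by rw [hμ]; linarith
  -- derivative computation
  have hder : deriv S x = μ₁ / (1 - x) - μ₂ / x := by
    have hEq : S =ᶠ[nhds x] fun y =>
        μ₁ * (Real.log μ₁ - Real.log μ - Real.log (1 - y)) +
        μ₂ * (Real.log μ₂ - Real.log μ - Real.log y) := by
      filter_upwards [Ioo_mem_nhds hx0 hx1] with y hy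
      rw [hS y hy]
      obtain ⟨hy0, hy1⟩ := hy
      have hy1' : (0:ℝ) < 1 - y := by linarith
      rw [Real.log_div (ne_of_gt h₁) (by positivity),
          Real.log_div (ne_of_gt h₂) (by positivity),
          Real.log_mul (ne_of_gt hμ0) (ne_of_gt hy1'),
          Real.log_mul (ne_of_gt hμ0) (ne_of_gt hy0)]
      ring
    rw [Filter.EventuallyEq.deriv_eq hEq]
    have h1 : HasDerivAt (fun y : ℝ => Real.log (1 - y)) (-1 / (1 - x)) x := by
      have := (((hasDerivAt_id x).const_sub 1).log (ne_of_gt hx1'))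
      simpa using this
    have h2 : HasDerivAt (fun y : ℝ => Real.log y) (1 / x) x := by
      simpa [one_div] using Real.hasDerivAt_log (ne_of_gt hx0)
    have hg : HasDerivAt (fun y =>
        μ₁ * (Real.log μ₁ - Real.log μ - Real.log (1 - y)) +
        μ₂ * (Real.log μ₂ - Real.log μ - Real.log y))
        (μ₁ * (0 - 0 - (-1 / (1 - x))) + μ₂ * (0 - 0 - (1 / x))) x := by
      exact (((((hasDerivAt_const x (Real.log μ₁)).sub
        (hasDerivAt_const x (Real.log μ))).sub h1).const_mul μ₁).add
        ((((hasDerivAt_const x (Real.log μ₂)).sub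
        (hasDerivAt_const x (Real.log μ))).sub h2).const_mul μ₂))
    rw [hg.deriv]
    field_simp
    ring
  have hds : deriv S x = 2 * b x / a x := by
    rw [hder, hb, ha]
    field_simp
  refine ⟨hds, ?_, ?_⟩
  · rw [hH, hds, hb, ha]
    have h1 : x ≠ 0 := ne_of_gt hx0
    have h2 : (1:ℝ) - x ≠ 0 := ne_of_gt hx1'
    field_simp
    ring
  · intro p
    rw [hH, hH, hds, hb, ha]
    have h1 : x ≠ 0 := ne_of_gt hx0
    have h2 : (1:ℝ) - x ≠ 0 := ne_of_gt hx1'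
    field_simp
    ring
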